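/- Let S ∈ ℝ^{m×m}, B ∈ ℝ^{m×p}, a > 0, κ > 0, and let P ∈ ℝ^{m×m} be a symmetric positive definite matrix satisfying the algebraic Riccati equation SᵀP + PS − 2κPBBᵀP + aI = 0. Then for every λ ∈ ℂ with Re λ ≥ κ, the complex matrix S − λBBᵀP (where S, B, P are taken entrywise as complex matrices) is Hurwitz. -/

import Mathlib

open Matrix Polynomial
open scoped ComplexOrder

/-- A complex square matrix is Hurwitz if every eigenvalue (root of its characteristic
polynomial) has negative real part. -/
def IsHurwitzC {n : Type*} [Fintype n] [DecidableEq n] (M : Matrix n n ℂ) : Prop :=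
  ∀ μ : ℂ, M.charpoly.IsRoot μ → μ.re < 0

lemma exists_eigvec_aux {n : ℕ} (M : Matrix (Fin n) (Fin n) ℂ) {μ : ℂ}
    (h : M.charpoly.IsRoot μ) : ∃ v : Fin n → ℂ, v ≠ 0 ∧ M *ᵥ v = μ • v := by
  have h0 : (scalar (Fin n) μ - M).det = 0 := by
    have h' := h
    rw [Polynomial.IsRoot, Matrix.charpoly, eval_det, matPolyEquiv_charmatrix,
      eval_sub, eval_X, eval_C] at h'
    exact h'
  obtain ⟨v, hv, hv0⟩ := (Matrix.exists_mulVec_eq_zero_iff).mpr h0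
  refine ⟨v, hv, ?_⟩
  rw [sub_mulVec] at hv0
  have h1 : scalar (Fin n) μ *ᵥ v = μ • v := by
    ext i
    simp [scalar_apply, mulVec_diagonal]
  rw [h1] at hv0
  exact (sub_eq_zero.mp hv0).symm

lemma map_real_smul' {n q : ℕ} (r : ℝ) (M : Matrix (Fin n) (Fin q) ℝ) :
    (r • M).map Complex.ofReal = (r : ℂ) • M.map Complex.ofReal := by
  ext i j
  simp [Matrix.map_apply]

lemma conjT_map' {n q : ℕ} (M : Matrix (Fin n) (Fin q) ℝ) :
    (M.map Complex.ofReal)ᴴ = Mᵀ.map Complex.ofReal := by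
  ext i j
  simp [Matrix.conjTranspose_apply, Matrix.map_apply, Complex.conj_ofReal]

lemma map_real_mul {n q r : ℕ} (M : Matrix (Fin n) (Fin q) ℝ) (N : Matrix (Fin q) (Fin r) ℝ) :
    (M * N).map Complex.ofReal = M.map Complex.ofReal * N.map Complex.ofReal := by
  ext i j
  simp [Matrix.map_apply, Matrix.mul_apply]

lemma re_quad' {n : ℕ} (P : Matrix (Fin n) (Fin n) ℝ) (v : Fin n → ℂ) :
    (star v ⬝ᵥ ((P.map Complex.ofReal) *ᵥ v)).re
      = (fun i => (v i).re) ⬝ᵥ (P *ᵥ fun i => (v i).re)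
        + (fun i => (v i).im) ⬝ᵥ (P *ᵥ fun i => (v i).im) := by
  simp only [dotProduct, mulVec, Matrix.map_apply, Pi.star_apply, Complex.re_sum,
    Finset.mul_sum, ← Finset.sum_add_distrib]
  refine Finset.sum_congr rfl fun i _ => ?_
  refine Finset.sum_congr rfl fun j _ => ?_
  simp [Complex.mul_re, Complex.conj_re, Complex.conj_im]

/-- if `P ≻ 0` solves the ARE `SᵀP + PS − 2κPBBᵀP + aI = 0`, then for every
`λ ∈ ℂ` with `Re λ ≥ κ` the matrix `S − λBBᵀP` is Hurwitz. -/
theorem riccati_shifted_hurwitz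
    (m p : ℕ)
    (S : Matrix (Fin m) (Fin m) ℝ) (B : Matrix (Fin m) (Fin p) ℝ)
    (a κ : ℝ) (ha : 0 < a) (hκ : 0 < κ)
    (P : Matrix (Fin m) (Fin m) ℝ) (hP : P.PosDef)
    (hriccati : Sᵀ * P + P * S - (2 * κ) • (P * B * Bᵀ * P)
        + a • (1 : Matrix (Fin m) (Fin m) ℝ) = 0) :
    ∀ lam : ℂ, κ ≤ lam.re →
      IsHurwitzC (S.map Complex.ofReal - lam • ((B * Bᵀ * P).map Complex.ofReal)) := by
  intro lam hlam μ hμ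
  obtain ⟨v, hv, hev⟩ := exists_eigvec_aux _ hμ
  set Mc := S.map Complex.ofReal - lam • ((B * Bᵀ * P).map Complex.ofReal) with hMcdef
  set Pc := P.map Complex.ofReal with hPcdef
  set Q := P * B * Bᵀ * P with hQdef
  set Qc := Q.map Complex.ofReal with hQcdef
  have hPT : Pᵀ = P := by
    ext i j
    have h := congrFun (congrFun hP.1 i) j
    simpa [Matrix.conjTranspose_apply] using h
  -- real Riccati rearranged
  have hric' : Sᵀ * P + P * S = (2 * κ) • Q - a • (1 : Matrix (Fin m) (Fin m) ℝ) := by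
    rw [← sub_eq_zero, ← hriccati]
    abel
  -- complexified Riccati
  have hricC : (Sᵀ.map Complex.ofReal) * Pc + Pc * (S.map Complex.ofReal)
      = ((2 * κ : ℝ) : ℂ) • Qc - (a : ℂ) • (1 : Matrix (Fin m) (Fin m) ℂ) := by
    have := congrArg (fun M : Matrix (Fin m) (Fin m) ℝ => M.map Complex.ofReal) hric'
    simpa [Matrix.map_add, Matrix.map_sub, map_real_mul, map_real_smul',
      Matrix.map_one Complex.ofReal Complex.ofReal_zero Complex.ofReal_one] using this
  -- conjugate transpose of Mc
  have hMcH : Mcᴴ = Sᵀ.map Complex.ofReal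
      - (starRingEnd ℂ lam) • ((P * B * Bᵀ).map Complex.ofReal) := by
    rw [hMcdef, conjTranspose_sub, conjTranspose_smul, conjT_map', conjT_map']
    congr 2
    rw [transpose_mul, transpose_mul, transpose_transpose, hPT, Matrix.mul_assoc]
  -- the Lyapunov identity
  have hN : Mcᴴ * Pc + Pc * Mc
      = (((2 * κ : ℝ) : ℂ) - (starRingEnd ℂ lam + lam)) • Qc
        - (a : ℂ) • (1 : Matrix (Fin m) (Fin m) ℂ) := by
    have h1 : ((P * B * Bᵀ).map Complex.ofReal) * Pc = Qc := by
      rw [hPcdef, hQcdef, hQdef, ← map_real_mul]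
    have h2 : Pc * ((B * Bᵀ * P).map Complex.ofReal) = Qc := by
      have hassoc : P * (B * Bᵀ * P) = Q := by simp [hQdef, Matrix.mul_assoc]
      rw [hPcdef, ← map_real_mul, hassoc, hQcdef]
    rw [hMcH, hMcdef, sub_mul, mul_sub, smul_mul_assoc, mul_smul_comm, h1, h2]
    calc (Sᵀ.map Complex.ofReal * Pc - starRingEnd ℂ lam • Qc)
          + (Pc * S.map Complex.ofReal - lam • Qc)
        = (Sᵀ.map Complex.ofReal * Pc + Pc * S.map Complex.ofReal)
            - (starRingEnd ℂ lam + lam) • Qc := by module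
      _ = (((2 * κ : ℝ) : ℂ) • Qc - (a : ℂ) • (1 : Matrix (Fin m) (Fin m) ℂ))
            - (starRingEnd ℂ lam + lam) • Qc := by rw [hricC]
      _ = (((2 * κ : ℝ) : ℂ) - (starRingEnd ℂ lam + lam)) • Qc
            - (a : ℂ) • (1 : Matrix (Fin m) (Fin m) ℂ) := by module
  -- scalar quantities
  set c : ℂ := star v ⬝ᵥ (Pc *ᵥ v) with hcdef
  set d : ℂ := star v ⬝ᵥ (Qc *ᵥ v) with hddef
  set nsq : ℂ := star v ⬝ᵥ v with hnsqdef
  -- left-hand scalar identity via the eigenvector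
  have hL : star v ⬝ᵥ ((Mcᴴ * Pc + Pc * Mc) *ᵥ v) = (starRingEnd ℂ μ + μ) * c := by
    rw [add_mulVec, dotProduct_add, ← mulVec_mulVec, ← mulVec_mulVec]
    have t1 : star v ⬝ᵥ (Mcᴴ *ᵥ (Pc *ᵥ v)) = starRingEnd ℂ μ * c := by
      rw [dotProduct_mulVec, ← star_mulVec, hev, star_smul, smul_dotProduct]
      simp [hcdef, dotProduct_mulVec]
    have t2 : star v ⬝ᵥ (Pc *ᵥ (Mc *ᵥ v)) = μ * c := by
      rw [hev, mulVec_smul, dotProduct_smul]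
      simp [hcdef]
    rw [t1, t2]
    ring
  -- right-hand scalar identity
  have hR : star v ⬝ᵥ ((Mcᴴ * Pc + Pc * Mc) *ᵥ v)
      = (((2 * κ : ℝ) : ℂ) - (starRingEnd ℂ lam + lam)) * d - (a : ℂ) * nsq := by
    rw [hN, sub_mulVec, dotProduct_sub, smul_mulVec, smul_mulVec,
      one_mulVec, dotProduct_smul, dotProduct_smul]
    simp [hddef, hnsqdef, smul_eq_mul]
  have hkey : (starRingEnd ℂ μ + μ) * c
      = (((2 * κ : ℝ) : ℂ) - (starRingEnd ℂ lam + lam)) * d - (a : ℂ) * nsq := by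
    rw [← hL, hR]
  -- take real parts
  have hconjμ : starRingEnd ℂ μ + μ = ((2 * μ.re : ℝ) : ℂ) := by
    rw [add_comm]
    exact Complex.add_conj μ
  have hconjlam : starRingEnd ℂ lam + lam = ((2 * lam.re : ℝ) : ℂ) := by
    rw [add_comm]
    exact Complex.add_conj lam
  have hre : 2 * μ.re * c.re = (2 * κ - 2 * lam.re) * d.re - a * nsq.re := by
    have := congrArg Complex.re hkey
    rw [hconjμ, hconjlam, ← Complex.ofReal_sub] at this
    simpa [Complex.re_ofReal_mul, Complex.sub_re] using this
  -- positivity facts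
  have hcre : 0 < c.re := by
    rw [hcdef, hPcdef, re_quad' P v]
    set x : Fin m → ℝ := fun i => (v i).re with hx
    set y : Fin m → ℝ := fun i => (v i).im with hy
    have hxy : x ≠ 0 ∨ y ≠ 0 := by
      by_contra h
      push_neg at h
      apply hv
      ext i
      have h1 : x i = 0 := by rw [h.1]; rfl
      have h2 : y i = 0 := by rw [h.2]; rfl
      exact Complex.ext h1 h2
    rcases hxy with hx0 | hy0
    · have h1 : 0 < x ⬝ᵥ (P *ᵥ x) := by
        have := hP.dotProduct_mulVec_pos hx0
        simpa using this
      have h2 : 0 ≤ y ⬝ᵥ (P *ᵥ y) := by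
        have := hP.posSemidef.dotProduct_mulVec_nonneg y
        simpa using this
      linarith
    · have h1 : 0 ≤ x ⬝ᵥ (P *ᵥ x) := by
        have := hP.posSemidef.dotProduct_mulVec_nonneg x
        simpa using this
      have h2 : 0 < y ⬝ᵥ (P *ᵥ y) := by
        have := hP.dotProduct_mulVec_pos hy0
        simpa using this
      linarith
  have hdre : 0 ≤ d.re := by
    have hW : Qc = ((Bᵀ * P).map Complex.ofReal)ᴴ * ((Bᵀ * P).map Complex.ofReal) := by
      have hassoc2 : P * B * (Bᵀ * P) = Q := by simp [hQdef, Matrix.mul_assoc]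
      rw [conjT_map', transpose_mul, transpose_transpose, hPT, ← map_real_mul, hassoc2, hQcdef]
    have := (Matrix.posSemidef_conjTranspose_mul_self
      ((Bᵀ * P).map Complex.ofReal)).re_dotProduct_nonneg v
    rw [hddef, hW]
    simpa using this
  have hnre : 0 < nsq.re := by
    have := (Matrix.PosDef.one (n := Fin m) (R := ℂ)).re_dotProduct_pos hv
    simpa [hnsqdef, one_mulVec] using this
  nlinarith [hre, hcre, hdre, hnre, mul_nonneg (by linarith : (0:ℝ) ≤ 2 * lam.re - 2 * κ) hdre]
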